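/- Let a, b ∈ ℝ and c, d > 0. Let u_d : [0,∞) → ℝ be twice differentiable, r_d : [0,∞) → ℝ differentiable, and v_d : [0,∞) → ℝ differentiable with v̇_d = −a ṙ_d − b r_d − c u_d r_d − d v_d, and assume u_d, u̇_d, r_d, ṙ_d are bounded on [0,∞). Let τ̄_{1e}, τ_{2e} : ℝ × ℝ⁴ → ℝ be continuous feedback laws depending on (t, z_e, ψ_e, ū_e, r_e), and suppose the closed-loop subsystem ż_e = Φ(t, ψ_e) ψ_e − ū_e (r_e + r_d), ψ̇_e = r_e, ṙ_e = τ_{2e}, ū̇_e = τ̄_{1e} is GKES: there exist a class-κ function ρ₁ and γ > 0 such that every solution on [0,∞) satisfies ‖(z_e(t), ψ_e(t), ū_e(t), r_e(t))‖ ≤ ρ₁(‖(z_e(0), ψ_e(0), ū_e(0), r_e(0))‖) e^{−γ t}. Then the full closed-loop error system, obtained by adjoining the states (x_e, v̄_e) with dynamics ẋ_e = −(d/c) x_e − (1/d)(r_e + r_d) v̄_e + D₃ and v̄̇_e = −d v̄_e + d x_e (r_e + r_d) + D₄, where D₃ = ū_e/c − α(t, ψ_e) ψ_e + 0.5 u_d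 ψ_e² − v_d ψ_e + z_e (r_e + r_d)/d and D₄ = d(a r_e + b ψ_e + c u_d ψ_e) − ū_e (r_e + r_d) + c u̇_d ψ_e, is also GKES: there exist a class-κ function ρ₄ and γ' > 0 such that every solution on [0,∞) satisfies ‖(x_e(t), v̄_e(t), z_e(t), ψ_e(t), ū_e(t), r_e(t))‖ ≤ ρ₄(‖(x_e(0), v̄_e(0), z_e(0), ψ_e(0), ū_e(0), r_e(0))‖) e^{−γ' t} for all t ≥ 0. -/

import Mathlib

open Real Filter

/-- Euclidean norm on ℝ⁴. -/
noncomputable def norm4 (a b c d : ℝ) : ℝ := Real.sqrt (a ^ 2 + b ^ 2 + c ^ 2 + d ^ 2)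

/-- Euclidean norm on ℝ⁶. -/
noncomputable def norm6 (a b c d e f : ℝ) : ℝ :=
  Real.sqrt (a ^ 2 + b ^ 2 + c ^ 2 + d ^ 2 + e ^ 2 + f ^ 2)

/-- A class-κ function: continuous, strictly increasing on [0,∞), vanishing at 0. -/
def IsClassK (ρ : ℝ → ℝ) : Prop :=
  ContinuousOn ρ (Set.Ici 0) ∧ StrictMonoOn ρ (Set.Ici 0) ∧ ρ 0 = 0

lemma le_init_of_deriv_nonpos {f : ℝ → ℝ}
    (hf : ∀ u : ℝ, 0 ≤ u → ∃ f', HasDerivAt f f' u ∧ f' ≤ 0) {t : ℝ} (ht : 0 ≤ t) :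
    f t ≤ f 0 := by
  have hA : AntitoneOn f (Set.Ici (0:ℝ)) := by
    apply antitoneOn_of_deriv_nonpos (convex_Ici 0)
    · intro x hx; exact (hf x hx).choose_spec.1.continuousAt.continuousWithinAt
    · rw [interior_Ici]; intro x hx
      exact (hf x (le_of_lt hx)).choose_spec.1.differentiableAt.differentiableWithinAt
    · rw [interior_Ici]; intro x hx
      rw [(hf x (le_of_lt hx)).choose_spec.1.deriv]
      exact (hf x (le_of_lt hx)).choose_spec.2
  exact hA Set.self_mem_Ici ht ht

lemma abs_le_sqrt' {x s : ℝ} (h : x^2 ≤ s) : |x| ≤ Real.sqrt s := by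
  have h2 := Real.sqrt_le_sqrt h
  rwa [Real.sqrt_sq_eq_abs] at h2

lemma habs2 (p q : ℝ) : |p - q| ≤ |p| + |q| := by
  calc |p - q| = |p + -q| := by ring_nf
  _ ≤ |p| + |-q| := abs_add_le _ _
  _ = |p| + |q| := by rw [abs_neg]

set_option maxHeartbeats 1000000 in
/-- Cascade lemma for trajectory tracking: if the (z_e, ψ_e, ū_e, r_e)-subsystem is globally
κ-exponentially stable under the feedback laws (τ̄₁ₑ, τ₂ₑ), then the full error system
including (x_e, v̄_e) is also globally κ-exponentially stable. -/
theorem stmt4 (a b c d : ℝ) (hc : 0 < c) (hd : 0 < d)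
    (ud ud' rd rd' vd : ℝ → ℝ)
    (hud : ∀ t : ℝ, 0 ≤ t → HasDerivAt ud (ud' t) t)
    (hrd : ∀ t : ℝ, 0 ≤ t → HasDerivAt rd (rd' t) t)
    (hvd : ∀ t : ℝ, 0 ≤ t →
      HasDerivAt vd (-a * rd' t - b * rd t - c * ud t * rd t - d * vd t) t)
    (hbdd : ∃ M : ℝ, ∀ t : ℝ, 0 ≤ t →
      |ud t| ≤ M ∧ |ud' t| ≤ M ∧ |rd t| ≤ M ∧ |rd' t| ≤ M)
    (α Φ : ℝ → ℝ → ℝ)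
    (hα : ∀ t ψ : ℝ, α t ψ =
      if ψ = 0 then 0 else
        (ud t * (Real.cos ψ - 1 + ψ ^ 2 / 2) + vd t * (Real.sin ψ - ψ)) / ψ)
    (hΦ : ∀ t ψ : ℝ, Φ t ψ =
      d * (if ψ = 0 then 0 else
        (-(vd t) * (Real.cos ψ - 1 + ψ ^ 2 / 2) + ud t * (Real.sin ψ - ψ)) / ψ) +
      c * ud' t + 0.5 * d * vd t * ψ + d * ud t)
    (τ₁e τ₂e : ℝ → ℝ → ℝ → ℝ → ℝ → ℝ)
    (hτ₁cont : Continuous fun p : ℝ × ℝ × ℝ × ℝ × ℝ =>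
      τ₁e p.1 p.2.1 p.2.2.1 p.2.2.2.1 p.2.2.2.2)
    (hτ₂cont : Continuous fun p : ℝ × ℝ × ℝ × ℝ × ℝ =>
      τ₂e p.1 p.2.1 p.2.2.1 p.2.2.2.1 p.2.2.2.2)
    (hGKES : ∃ (ρ₁ : ℝ → ℝ) (γ : ℝ), IsClassK ρ₁ ∧ 0 < γ ∧
      ∀ ze ψe ue re : ℝ → ℝ,
        (∀ t : ℝ, 0 ≤ t →
          HasDerivAt ze (Φ t (ψe t) * ψe t - ue t * (re t + rd t)) t ∧
          HasDerivAt ψe (re t) t ∧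
          HasDerivAt re (τ₂e t (ze t) (ψe t) (ue t) (re t)) t ∧
          HasDerivAt ue (τ₁e t (ze t) (ψe t) (ue t) (re t)) t) →
        ∀ t : ℝ, 0 ≤ t →
          norm4 (ze t) (ψe t) (ue t) (re t) ≤
            ρ₁ (norm4 (ze 0) (ψe 0) (ue 0) (re 0)) * Real.exp (-γ * t)) :
    ∃ (ρ₄ : ℝ → ℝ) (γ' : ℝ), IsClassK ρ₄ ∧ 0 < γ' ∧
      ∀ xe vbe ze ψe ue re : ℝ → ℝ,
        (∀ t : ℝ, 0 ≤ t →
          HasDerivAt xe (-(d / c) * xe t - (1 / d) * (re t + rd t) * vbe t +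
            (ue t / c - α t (ψe t) * ψe t + 0.5 * ud t * ψe t ^ 2 - vd t * ψe t +
              ze t * (re t + rd t) / d)) t ∧
          HasDerivAt vbe (-d * vbe t + d * xe t * (re t + rd t) +
            (d * (a * re t + b * ψe t + c * ud t * ψe t) - ue t * (re t + rd t) +
              c * ud' t * ψe t)) t ∧
          HasDerivAt ze (Φ t (ψe t) * ψe t - ue t * (re t + rd t)) t ∧
          HasDerivAt ψe (re t) t ∧
          HasDerivAt re (τ₂e t (ze t) (ψe t) (ue t) (re t)) t ∧
          HasDerivAt ue (τ₁e t (ze t) (ψe t) (ue t) (re t)) t) →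
        ∀ t : ℝ, 0 ≤ t →
          norm6 (xe t) (vbe t) (ze t) (ψe t) (ue t) (re t) ≤
            ρ₄ (norm6 (xe 0) (vbe 0) (ze 0) (ψe 0) (ue 0) (re 0)) * Real.exp (-γ' * t) := by
  obtain ⟨M, hM⟩ := hbdd
  have hM0 : 0 ≤ M := le_trans (abs_nonneg _) (hM 0 le_rfl).1
  have he : ∀ k s : ℝ, HasDerivAt (fun τ => Real.exp (k*τ)) (Real.exp (k*s)*k) s :=
    fun k s => by simpa using ((hasDerivAt_id s).const_mul k).exp
  -- Step A : bound on vd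
  obtain ⟨Mv, hMv0, hMv⟩ : ∃ Mv : ℝ, 0 ≤ Mv ∧ ∀ t, 0 ≤ t → |vd t| ≤ Mv := by
    set G := |a| * M + |b| * M + c*M*M with hG
    clear_value G
    have hG0 : 0 ≤ G := by rw [hG]; positivity
    refine ⟨|vd 0| + G/d, by positivity, ?_⟩
    intro t ht
    have hforce : ∀ s : ℝ, 0 ≤ s → |(-a * rd' s - b * rd s - c * ud s * rd s)| ≤ G := by
      intro s hs
      obtain ⟨h1, -, h2, h3⟩ := hM s hs
      have k1 : |a * rd' s| ≤ |a| * M := by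
        rw [abs_mul]; exact mul_le_mul_of_nonneg_left h3 (abs_nonneg a)
      have k2 : |b * rd s| ≤ |b| * M := by
        rw [abs_mul]; exact mul_le_mul_of_nonneg_left h2 (abs_nonneg b)
      have k3 : |c * ud s * rd s| ≤ c*M*M := by
        rw [abs_mul, abs_mul, abs_of_pos hc]
        have := mul_le_mul (mul_le_mul_of_nonneg_left h1 hc.le) h2 (abs_nonneg _) (by positivity)
        linarith
      calc |(-a * rd' s - b * rd s - c * ud s * rd s)|
          ≤ |(-a * rd' s - b * rd s)| + |c * ud s * rd s| := habs2 _ _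
        _ ≤ |(-a * rd' s)| + |b * rd s| + |c * ud s * rd s| := by
            have := habs2 (-a * rd' s) (b * rd s); linarith
        _ ≤ G := by rw [hG]; rw [show -a * rd' s = -(a * rd' s) by ring, abs_neg]; linarith
    have hup : vd t ≤ |vd 0| + G/d := by
      have h1 := le_init_of_deriv_nonpos
        (f := fun τ => Real.exp (d*τ) * vd τ - (G/d)*Real.exp (d*τ))
        (by
          intro u hu
          refine ⟨_, ((he d u).mul (hvd u hu)).sub ((he d u).const_mul (G/d)), ?_⟩
          have hE : 0 < Real.exp (d*u) := Real.exp_pos _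
          have hf := hforce u hu
          have habs := abs_le.mp hf
          have hGd : (G/d)*(Real.exp (d*u)*d) = G * Real.exp (d*u) := by field_simp
          have heq : Real.exp (d*u)*d * vd u + Real.exp (d*u) * (-a * rd' u - b * rd u - c * ud u * rd u - d * vd u)
              = Real.exp (d*u) * (-a * rd' u - b * rd u - c * ud u * rd u) := by ring
          rw [heq, hGd]
          have := mul_le_mul_of_nonneg_left habs.2 hE.le
          linarith only [this]) ht
      simp only [mul_zero, Real.exp_zero, one_mul, mul_one] at h1
      have hE1 : (1:ℝ) ≤ Real.exp (d*t) := Real.one_le_exp (by positivity)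
      have hEpos : (0:ℝ) < Real.exp (d*t) := Real.exp_pos _
      have hGd0 : 0 ≤ G/d := by positivity
      have h2 : Real.exp (d*t) * vd t ≤ |vd 0| + (G/d)*Real.exp (d*t) := by
        have : vd 0 ≤ |vd 0| := le_abs_self _
        linarith only [h1, this, hGd0]
      nlinarith only [h2, hEpos, hE1, hGd0, mul_nonneg (abs_nonneg (vd 0)) (sub_nonneg.mpr hE1)]
    have hlo : -(|vd 0| + G/d) ≤ vd t := by
      have h1 := le_init_of_deriv_nonpos
        (f := fun τ => -(Real.exp (d*τ) * vd τ) - (G/d)*Real.exp (d*τ))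
        (by
          intro u hu
          refine ⟨_, (((he d u).mul (hvd u hu)).neg).sub ((he d u).const_mul (G/d)), ?_⟩
          have hE : 0 < Real.exp (d*u) := Real.exp_pos _
          have hf := hforce u hu
          have habs := abs_le.mp hf
          have hGd : (G/d)*(Real.exp (d*u)*d) = G * Real.exp (d*u) := by field_simp
          have heq : -(Real.exp (d*u)*d * vd u + Real.exp (d*u) * (-a * rd' u - b * rd u - c * ud u * rd u - d * vd u))
              = -(Real.exp (d*u) * (-a * rd' u - b * rd u - c * ud u * rd u)) := by ring
          rw [heq, hGd]
          have := mul_le_mul_of_nonneg_left habs.1 hE.le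
          linarith only [this]) ht
      simp only [mul_zero, Real.exp_zero, one_mul, mul_one] at h1
      have hE1 : (1:ℝ) ≤ Real.exp (d*t) := Real.one_le_exp (by positivity)
      have hEpos : (0:ℝ) < Real.exp (d*t) := Real.exp_pos _
      have hGd0 : 0 ≤ G/d := by positivity
      have h2 : -(|vd 0| + (G/d)*Real.exp (d*t)) ≤ Real.exp (d*t) * vd t := by
        have : -|vd 0| ≤ vd 0 := neg_abs_le _
        linarith only [h1, this, hGd0]
      nlinarith only [h2, hEpos, hE1, hGd0, mul_nonneg (abs_nonneg (vd 0)) (sub_nonneg.mpr hE1)]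
    rw [abs_le]; exact ⟨hlo, hup⟩
  obtain ⟨ρ₁, γ, ⟨hρc, hρm, hρ0⟩, hγ, hsub⟩ := hGKES
  have hρmono : MonotoneOn ρ₁ (Set.Ici 0) := hρm.monotoneOn
  have hρnn : ∀ s : ℝ, 0 ≤ s → 0 ≤ ρ₁ s := fun s hs => hρ0 ▸ hρmono Set.self_mem_Ici hs hs
  -- bound on α
  have halpha : ∀ τ ψ : ℝ, 0 ≤ τ → |α τ ψ| ≤ M*|ψ| + 2*Mv := by
    intro τ ψ hτ
    rw [hα]
    split_ifs with hψ
    · simp [hψ]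
      linarith [mul_nonneg hM0 (abs_nonneg (0:ℝ))]
    · rw [abs_div, div_le_iff₀ (abs_pos.mpr hψ)]
      have h1 : 0 ≤ Real.cos ψ - 1 + ψ^2/2 := by
        nlinarith only [Real.one_sub_sq_div_two_le_cos (x := ψ)]
      have h2 : Real.cos ψ - 1 + ψ^2/2 ≤ ψ^2/2 := by nlinarith only [Real.cos_le_one ψ]
      have h3 : |Real.sin ψ - ψ| ≤ 2*|ψ| := by
        have k1 := Real.abs_sin_le_abs (x := ψ)
        have k2 := habs2 (Real.sin ψ) ψ
        linarith
      have h4 := (hM τ hτ).1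
      have h5 := hMv τ hτ
      have h6 : |ud τ * (Real.cos ψ - 1 + ψ^2/2) + vd τ * (Real.sin ψ - ψ)| ≤
          |ud τ| * (ψ^2/2) + |vd τ| * (2*|ψ|) := by
        have t1 : |ud τ * (Real.cos ψ - 1 + ψ^2/2)| ≤ |ud τ| * (ψ^2/2) := by
          rw [abs_mul, abs_of_nonneg h1]; exact mul_le_mul_of_nonneg_left h2 (abs_nonneg _)
        have t2 : |vd τ * (Real.sin ψ - ψ)| ≤ |vd τ| * (2*|ψ|) := by
          rw [abs_mul]; exact mul_le_mul_of_nonneg_left h3 (abs_nonneg _)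
        have := abs_add_le (ud τ * (Real.cos ψ - 1 + ψ^2/2)) (vd τ * (Real.sin ψ - ψ))
        linarith
      have h7 : |ud τ| * (ψ^2/2) + |vd τ| * (2*|ψ|) ≤ (M*|ψ| + 2*Mv)*|ψ| := by
        have e1 : ψ^2 = |ψ| *|ψ| := by rw [pow_two, ← abs_mul_abs_self]
        rw [e1]
        have k1 := mul_le_mul_of_nonneg_right h4 (mul_nonneg (abs_nonneg ψ) (abs_nonneg ψ))
        have k2 := mul_le_mul_of_nonneg_right h5 (abs_nonneg ψ)
        linarith only [k1, k2, mul_nonneg hM0 (mul_nonneg (abs_nonneg ψ) (abs_nonneg ψ))]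
      linarith only [h6, h7]
  -- constants
  set lam := min (d/c) d with hlamdef
  clear_value lam
  have hlam0 : 0 < lam := by rw [hlamdef]; exact lt_min (by positivity) hd
  have hlamdc : lam ≤ d/c := by rw [hlamdef]; exact min_le_left _ _
  have hlamd : lam ≤ d := by rw [hlamdef]; exact min_le_right _ _
  set m := min lam (2*γ) with hmdef
  clear_value m
  have hm0 : 0 < m := by rw [hmdef]; exact lt_min hlam0 (by positivity)
  have hmlam : m ≤ lam := by rw [hmdef]; exact min_le_left _ _
  have hmγ : m ≤ 2*γ := by rw [hmdef]; exact min_le_right _ _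
  set κ := lam - m/2 with hκdef
  clear_value κ
  have hκ0 : 0 < κ := by rw [hκdef]; linarith
  refine ⟨fun s => Real.sqrt ((d+1/d)*((d+1/d)*s^2 +
      (d*((1/c + 3*Mv + M/d + (1.5*M + 1/d)*ρ₁ s)*ρ₁ s)^2 +
       ((d*(|a|+|b|+c*M) + M + c*M + ρ₁ s)*ρ₁ s)^2/d)/lam/κ) + (ρ₁ s)^2),
    m/4, ⟨?_, ?_, ?_⟩, by linarith, ?_⟩
  · -- continuity
    have hK3c : ContinuousOn (fun s : ℝ => (1/c + 3*Mv + M/d + (1.5*M + 1/d)*ρ₁ s)*ρ₁ s)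
        (Set.Ici 0) := (continuousOn_const.add (continuousOn_const.mul hρc)).mul hρc
    have hK4c : ContinuousOn (fun s : ℝ => (d*(|a|+|b|+c*M) + M + c*M + ρ₁ s)*ρ₁ s)
        (Set.Ici 0) := (continuousOn_const.add hρc).mul hρc
    have hin : ContinuousOn (fun s : ℝ => (d+1/d)*((d+1/d)*s^2 +
        (d*((1/c + 3*Mv + M/d + (1.5*M + 1/d)*ρ₁ s)*ρ₁ s)^2 +
         ((d*(|a|+|b|+c*M) + M + c*M + ρ₁ s)*ρ₁ s)^2/d)/lam/κ) + (ρ₁ s)^2) (Set.Ici 0) := by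
      refine ContinuousOn.add (continuousOn_const.mul (ContinuousOn.add
        (continuousOn_const.mul ((continuous_pow 2).continuousOn)) ?_)) (hρc.pow 2)
      exact (((continuousOn_const.mul (hK3c.pow 2)).add
        ((hK4c.pow 2).div_const d)).div_const lam).div_const κ
    exact hin.sqrt
  · -- strict monotonicity
    intro x hx y hy hxy
    beta_reduce
    have hx0 : (0:ℝ) ≤ x := hx
    have hρxy : ρ₁ x ≤ ρ₁ y := hρmono hx hy hxy.le
    have prx : 0 ≤ ρ₁ x := hρnn x hx
    have pry : 0 ≤ ρ₁ y := hρnn y hy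
    set r1 := ρ₁ x with hr1
    clear_value r1
    set r2 := ρ₁ y with hr2
    clear_value r2
    set A3 := 1/c + 3*Mv + M/d with hA3def
    clear_value A3
    set B3 := 1.5*M + 1/d with hB3def
    clear_value B3
    set A4 := d*(|a|+|b|+c*M) + M + c*M with hA4def
    clear_value A4
    set Qx := (d*((A3 + B3*r1)*r1)^2 + ((A4 + r1)*r1)^2/d)/lam/κ with hQxdef
    clear_value Qx
    set Qy := (d*((A3 + B3*r2)*r2)^2 + ((A4 + r2)*r2)^2/d)/lam/κ with hQydef
    clear_value Qy
    have hA3 : 0 ≤ A3 := by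
      rw [hA3def]
      have h1 := div_nonneg hM0 hd.le
      have h2 : (0:ℝ) < 1/c := by positivity
      linarith
    have hB3 : 0 ≤ B3 := by
      rw [hB3def]
      have : (0:ℝ) < 1/d := by positivity
      linarith
    have hA4 : 0 ≤ A4 := by
      rw [hA4def]
      have h1 : 0 ≤ |a|+|b|+c*M :=
        add_nonneg (add_nonneg (abs_nonneg a) (abs_nonneg b)) (mul_nonneg hc.le hM0)
      have h2 := mul_nonneg hd.le h1
      have h3 := mul_nonneg hc.le hM0
      linarith
    have hf3x : 0 ≤ A3 + B3*r1 := add_nonneg hA3 (mul_nonneg hB3 prx)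
    have hf3y : 0 ≤ A3 + B3*r2 := add_nonneg hA3 (mul_nonneg hB3 pry)
    have hK3m : (A3 + B3*r1)*r1 ≤ (A3 + B3*r2)*r2 :=
      mul_le_mul (add_le_add_right (mul_le_mul_of_nonneg_left hρxy hB3) A3) hρxy prx hf3y
    have hK3x0 : 0 ≤ (A3 + B3*r1)*r1 := mul_nonneg hf3x prx
    have hK4m : (A4 + r1)*r1 ≤ (A4 + r2)*r2 :=
      mul_le_mul (add_le_add_right hρxy A4) hρxy prx (by linarith)
    have hK4x0 : 0 ≤ (A4 + r1)*r1 := mul_nonneg (by linarith) prx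
    have hK3sq := pow_le_pow_left₀ hK3x0 hK3m 2
    have hK4sq := pow_le_pow_left₀ hK4x0 hK4m 2
    have hnum : d*((A3 + B3*r1)*r1)^2 + ((A4 + r1)*r1)^2/d ≤
        d*((A3 + B3*r2)*r2)^2 + ((A4 + r2)*r2)^2/d := by
      have h2 := mul_le_mul_of_nonneg_left hK3sq hd.le
      have h3 := (div_le_div_iff_of_pos_right hd).mpr hK4sq
      linarith
    have hQm : Qx ≤ Qy := by
      rw [hQxdef, hQydef]
      exact (div_le_div_iff_of_pos_right hκ0).mpr ((div_le_div_iff_of_pos_right hlam0).mpr hnum)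
    have hQx0 : 0 ≤ Qx := by
      rw [hQxdef]
      exact div_nonneg (div_nonneg (add_nonneg (mul_nonneg hd.le (sq_nonneg _))
        (div_nonneg (sq_nonneg _) hd.le)) hlam0.le) hκ0.le
    have hdd : (0:ℝ) < d + 1/d := by positivity
    apply Real.sqrt_lt_sqrt
    · exact add_nonneg (mul_nonneg hdd.le (add_nonneg (mul_nonneg hdd.le (sq_nonneg x)) hQx0))
        (sq_nonneg _)
    · have hx2 : x^2 < y^2 := by nlinarith only [hx0, hxy]
      have hr2sq : r1^2 ≤ r2^2 := pow_le_pow_left₀ prx hρxy 2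
      have k1 : (d+1/d)*x^2 < (d+1/d)*y^2 := mul_lt_mul_of_pos_left hx2 hdd
      have k2 := mul_lt_mul_of_pos_left (add_lt_add_of_lt_of_le k1 hQm) hdd
      linarith only [k2, hr2sq]
  · -- vanishing at zero
    beta_reduce
    rw [hρ0]
    norm_num
  · -- the main bound
    intro xe vbe ze ψe ue re hsol t ht
    set s60 := norm6 (xe 0) (vbe 0) (ze 0) (ψe 0) (ue 0) (re 0) with hs60def
    clear_value s60
    have hs600 : 0 ≤ s60 := by rw [hs60def]; exact Real.sqrt_nonneg _
    beta_reduce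
    set P := ρ₁ s60 with hPdef
    clear_value P
    have hP0 : 0 ≤ P := by rw [hPdef]; exact hρnn _ hs600
    set K3 := (1/c + 3*Mv + M/d + (1.5*M + 1/d)*P)*P with hK3def
    clear_value K3
    set K4 := (d*(|a|+|b|+c*M) + M + c*M + P)*P with hK4def
    clear_value K4
    set Q := (d*K3^2 + K4^2/d)/lam with hQdef
    clear_value Q
    have hK30 : 0 ≤ K3 := by
      rw [hK3def]
      have hA3 : 0 ≤ 1/c + 3*Mv + M/d := by
        have h1 := div_nonneg hM0 hd.le
        have h2 : (0:ℝ) < 1/c := by positivity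
        linarith
      have hB3 : (0:ℝ) ≤ 1.5*M + 1/d := by
        have : (0:ℝ) < 1/d := by positivity
        linarith
      exact mul_nonneg (by nlinarith [mul_nonneg hB3 hP0]) hP0
    have hK40 : 0 ≤ K4 := by
      rw [hK4def]
      have h1 : 0 ≤ |a|+|b|+c*M :=
        add_nonneg (add_nonneg (abs_nonneg a) (abs_nonneg b)) (mul_nonneg hc.le hM0)
      exact mul_nonneg (by nlinarith [mul_nonneg hd.le h1, mul_nonneg hc.le hM0]) hP0
    have hQ0 : 0 ≤ Q := by
      rw [hQdef]
      exact div_nonneg (add_nonneg (mul_nonneg hd.le (sq_nonneg _))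
        (div_nonneg (sq_nonneg _) hd.le)) hlam0.le
    have hQκ0 : 0 ≤ Q/κ := div_nonneg hQ0 hκ0.le
    -- subsystem decay
    have hsub4 : ∀ τ : ℝ, 0 ≤ τ → norm4 (ze τ) (ψe τ) (ue τ) (re τ) ≤ P * Real.exp (-γ*τ) := by
      intro τ hτ
      have h0 := hsub ze ψe ue re (fun s hs => ⟨(hsol s hs).2.2.1, (hsol s hs).2.2.2.1,
        (hsol s hs).2.2.2.2.1, (hsol s hs).2.2.2.2.2⟩) τ hτ
      refine h0.trans (mul_le_mul_of_nonneg_right ?_ (Real.exp_pos _).le)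
      rw [hPdef]
      have hmem1 : norm4 (ze 0) (ψe 0) (ue 0) (re 0) ∈ Set.Ici (0:ℝ) :=
        Set.mem_Ici.mpr (by unfold norm4; exact Real.sqrt_nonneg _)
      have hmem2 : s60 ∈ Set.Ici (0:ℝ) := Set.mem_Ici.mpr hs600
      have hbound : norm4 (ze 0) (ψe 0) (ue 0) (re 0) ≤ s60 := by
        rw [hs60def]; unfold norm4 norm6
        apply Real.sqrt_le_sqrt
        linarith only [sq_nonneg (xe 0), sq_nonneg (vbe 0)]
      exact hρmono hmem1 hmem2 hbound
    have hcomp : ∀ τ : ℝ, 0 ≤ τ → |ze τ| ≤ P*Real.exp (-γ*τ) ∧ |ψe τ| ≤ P*Real.exp (-γ*τ) ∧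
        |ue τ| ≤ P*Real.exp (-γ*τ) ∧ |re τ| ≤ P*Real.exp (-γ*τ) := by
      intro τ hτ
      have h := hsub4 τ hτ
      refine ⟨le_trans ?_ h, le_trans ?_ h, le_trans ?_ h, le_trans ?_ h⟩ <;> unfold norm4
      · apply abs_le_sqrt'
        linarith only [sq_nonneg (ψe τ), sq_nonneg (ue τ), sq_nonneg (re τ)]
      · apply abs_le_sqrt'
        linarith only [sq_nonneg (ze τ), sq_nonneg (ue τ), sq_nonneg (re τ)]
      · apply abs_le_sqrt'
        linarith only [sq_nonneg (ze τ), sq_nonneg (ψe τ), sq_nonneg (re τ)]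
      · apply abs_le_sqrt'
        linarith only [sq_nonneg (ze τ), sq_nonneg (ψe τ), sq_nonneg (ue τ)]
    have hE1 : ∀ τ : ℝ, 0 ≤ τ → Real.exp (-γ*τ) ≤ 1 := by
      intro τ hτ
      apply Real.exp_le_one_iff.mpr
      have := mul_nonneg hγ.le hτ
      linarith only [this]
    have hPE : ∀ τ : ℝ, 0 ≤ τ → P*Real.exp (-γ*τ) ≤ P := fun τ hτ =>
      mul_le_of_le_one_right hP0 (hE1 τ hτ)
    have hRb : ∀ τ : ℝ, 0 ≤ τ → |re τ + rd τ| ≤ P + M := by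
      intro τ hτ
      have h1 := (hcomp τ hτ).2.2.2
      have h2 := (hM τ hτ).2.2.1
      have h3 := hPE τ hτ
      calc |re τ + rd τ| ≤ |re τ| + |rd τ| := abs_add_le _ _
      _ ≤ P + M := by linarith only [h1, h2, h3]
    have halpha' : ∀ τ : ℝ, 0 ≤ τ → |α τ (ψe τ)| ≤ M*P + 2*Mv := by
      intro τ hτ
      have h1 := halpha τ (ψe τ) hτ
      have h2 : |ψe τ| ≤ P := le_trans (hcomp τ hτ).2.1 (hPE τ hτ)
      linarith only [h1, mul_le_mul_of_nonneg_left h2 hM0]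
    -- D3 bound
    have hD3 : ∀ τ : ℝ, 0 ≤ τ →
        |ue τ / c - α τ (ψe τ) * ψe τ + 0.5 * ud τ * ψe τ ^ 2 - vd τ * ψe τ +
          ze τ * (re τ + rd τ) / d| ≤ K3*Real.exp (-γ*τ) := by
      intro τ hτ
      obtain ⟨hze, hψ, hue, hre⟩ := hcomp τ hτ
      have hE0 : (0:ℝ) < Real.exp (-γ*τ) := Real.exp_pos _
      have hψP : |ψe τ| ≤ P := le_trans hψ (hPE τ hτ)
      have hud := (hM τ hτ).1
      have hvdb := hMv τ hτ
      have tb1 : |ue τ / c| ≤ P*Real.exp (-γ*τ)/c := by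
        rw [abs_div, abs_of_pos hc]
        exact (div_le_div_iff_of_pos_right hc).mpr hue
      have tb2 : |α τ (ψe τ) * ψe τ| ≤ (M*P+2*Mv)*(P*Real.exp (-γ*τ)) := by
        rw [abs_mul]
        exact mul_le_mul (halpha' τ hτ) hψ (abs_nonneg _) (by linarith only [hMv0, mul_nonneg hM0 hP0])
      have tb3 : |0.5 * ud τ * ψe τ ^ 2| ≤ 0.5*(M*(P*(P*Real.exp (-γ*τ)))) := by
        have heq : |0.5 * ud τ * ψe τ ^ 2| = 0.5*(|ud τ| *(|ψe τ| *|ψe τ|)) := by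
          rw [pow_two, abs_mul, abs_mul, abs_mul, abs_of_pos (by norm_num : (0:ℝ) < 0.5)]
          ring
        rw [heq]
        have s1 : |ψe τ| *|ψe τ| ≤ P*(P*Real.exp (-γ*τ)) := mul_le_mul hψP hψ (abs_nonneg _) hP0
        have s2 : |ud τ| *(|ψe τ| *|ψe τ|) ≤ M*(P*(P*Real.exp (-γ*τ))) :=
          mul_le_mul hud s1 (mul_nonneg (abs_nonneg _) (abs_nonneg _)) hM0
        linarith only [s2]
      have tb4 : |vd τ * ψe τ| ≤ Mv*(P*Real.exp (-γ*τ)) := by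
        rw [abs_mul]; exact mul_le_mul hvdb hψ (abs_nonneg _) hMv0
      have tb5 : |ze τ * (re τ + rd τ) / d| ≤ (P*Real.exp (-γ*τ))*(P+M)/d := by
        rw [abs_div, abs_of_pos hd, abs_mul]
        exact (div_le_div_iff_of_pos_right hd).mpr
          (mul_le_mul hze (hRb τ hτ) (abs_nonneg _) (mul_nonneg hP0 hE0.le))
      have tri : |ue τ / c - α τ (ψe τ) * ψe τ + 0.5 * ud τ * ψe τ ^ 2 - vd τ * ψe τ +
            ze τ * (re τ + rd τ) / d| ≤
          |ue τ / c| + |α τ (ψe τ) * ψe τ| + |0.5 * ud τ * ψe τ ^ 2| + |vd τ * ψe τ| +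
            |ze τ * (re τ + rd τ) / d| := by
        have q1 := abs_add_le (ue τ / c - α τ (ψe τ) * ψe τ + 0.5 * ud τ * ψe τ ^ 2 - vd τ * ψe τ)
          (ze τ * (re τ + rd τ) / d)
        have q2 := habs2 (ue τ / c - α τ (ψe τ) * ψe τ + 0.5 * ud τ * ψe τ ^ 2) (vd τ * ψe τ)
        have q3 := abs_add_le (ue τ / c - α τ (ψe τ) * ψe τ) (0.5 * ud τ * ψe τ ^ 2)
        have q4 := habs2 (ue τ / c) (α τ (ψe τ) * ψe τ)
        linarith only [q1, q2, q3, q4]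
      rw [hK3def]
      ring_nf at tri tb1 tb2 tb3 tb4 tb5 ⊢
      linarith only [tri, tb1, tb2, tb3, tb4, tb5]
    -- D4 bound
    have hD4 : ∀ τ : ℝ, 0 ≤ τ →
        |d * (a * re τ + b * ψe τ + c * ud τ * ψe τ) - ue τ * (re τ + rd τ) +
          c * ud' τ * ψe τ| ≤ K4*Real.exp (-γ*τ) := by
      intro τ hτ
      obtain ⟨hze, hψ, hue, hre⟩ := hcomp τ hτ
      have hE0 : (0:ℝ) < Real.exp (-γ*τ) := Real.exp_pos _
      have hud := (hM τ hτ).1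
      have hud' := (hM τ hτ).2.1
      have p1 : |a * re τ| ≤ |a| *(P*Real.exp (-γ*τ)) := by
        rw [abs_mul]; exact mul_le_mul_of_nonneg_left hre (abs_nonneg a)
      have p2 : |b * ψe τ| ≤ |b| *(P*Real.exp (-γ*τ)) := by
        rw [abs_mul]; exact mul_le_mul_of_nonneg_left hψ (abs_nonneg b)
      have p3 : |c * ud τ * ψe τ| ≤ c*(M*(P*Real.exp (-γ*τ))) := by
        rw [abs_mul, abs_mul, abs_of_pos hc]
        have s1 : |ud τ| *|ψe τ| ≤ M*(P*Real.exp (-γ*τ)) :=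
          mul_le_mul hud hψ (abs_nonneg _) hM0
        linarith only [mul_le_mul_of_nonneg_left s1 hc.le]
      have p3' : |c * ud' τ * ψe τ| ≤ c*(M*(P*Real.exp (-γ*τ))) := by
        rw [abs_mul, abs_mul, abs_of_pos hc]
        have s1 : |ud' τ| *|ψe τ| ≤ M*(P*Real.exp (-γ*τ)) :=
          mul_le_mul hud' hψ (abs_nonneg _) hM0
        linarith only [mul_le_mul_of_nonneg_left s1 hc.le]
      have pinner : |a * re τ + b * ψe τ + c * ud τ * ψe τ| ≤
          |a * re τ| + |b * ψe τ| + |c * ud τ * ψe τ| := by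
        have q1 := abs_add_le (a * re τ + b * ψe τ) (c * ud τ * ψe τ)
        have q2 := abs_add_le (a * re τ) (b * ψe τ)
        linarith only [q1, q2]
      have tb1 : |d * (a * re τ + b * ψe τ + c * ud τ * ψe τ)| ≤
          d*(|a| *(P*Real.exp (-γ*τ)) + |b| *(P*Real.exp (-γ*τ)) + c*(M*(P*Real.exp (-γ*τ)))) := by
        rw [abs_mul, abs_of_pos hd]
        apply mul_le_mul_of_nonneg_left _ hd.le
        linarith only [pinner, p1, p2, p3]
      have tb2 : |ue τ * (re τ + rd τ)| ≤ (P*Real.exp (-γ*τ))*(P+M) := by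
        rw [abs_mul]
        exact mul_le_mul hue (hRb τ hτ) (abs_nonneg _) (mul_nonneg hP0 hE0.le)
      have tri : |d * (a * re τ + b * ψe τ + c * ud τ * ψe τ) - ue τ * (re τ + rd τ) +
            c * ud' τ * ψe τ| ≤
          |d * (a * re τ + b * ψe τ + c * ud τ * ψe τ)| + |ue τ * (re τ + rd τ)| +
            |c * ud' τ * ψe τ| := by
        have q1 := abs_add_le (d * (a * re τ + b * ψe τ + c * ud τ * ψe τ) - ue τ * (re τ + rd τ))
          (c * ud' τ * ψe τ)
        have q2 := habs2 (d * (a * re τ + b * ψe τ + c * ud τ * ψe τ)) (ue τ * (re τ + rd τ))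
        linarith only [q1, q2]
      rw [hK4def]
      linarith only [tri, tb1, tb2, p3']
    -- Gronwall
    have hWle : ∀ τ : ℝ, 0 ≤ τ →
        Real.exp (lam*τ)*(d*xe τ^2 + vbe τ^2/d) - (Q/κ)*Real.exp (κ*τ) ≤
          (d*xe 0^2 + vbe 0^2/d) - Q/κ := by
      intro τ hτ
      have h1 := le_init_of_deriv_nonpos
        (f := fun s => Real.exp (lam*s)*(d*xe s^2 + vbe s^2/d) - (Q/κ)*Real.exp (κ*s))
        (by
          intro u hu
          obtain ⟨hx1, hx2, -, -, -, -⟩ := hsol u hu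
          have hVu : HasDerivAt (fun s => d*xe s^2 + vbe s^2/d)
              (2*d*xe u*(-(d / c) * xe u - (1 / d) * (re u + rd u) * vbe u +
                (ue u / c - α u (ψe u) * ψe u + 0.5 * ud u * ψe u ^ 2 - vd u * ψe u +
                  ze u * (re u + rd u) / d)) +
               2*vbe u*(-d * vbe u + d * xe u * (re u + rd u) +
                (d * (a * re u + b * ψe u + c * ud u * ψe u) - ue u * (re u + rd u) +
                  c * ud' u * ψe u))/d) u := by
            have h := ((hx1.pow 2).const_mul d).add ((hx2.pow 2).div_const d)
            refine h.congr_deriv ?_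
            push_cast
            ring
          refine ⟨_, ((he lam u).mul hVu).sub ((he κ u).const_mul (Q/κ)), ?_⟩
          have hd3 := hD3 u hu
          have hd4 := hD4 u hu
          set Rv := re u + rd u with hRv
          clear_value Rv
          set D3v := ue u / c - α u (ψe u) * ψe u + 0.5 * ud u * ψe u ^ 2 - vd u * ψe u +
            ze u * Rv / d with hD3v
          set D4v := d * (a * re u + b * ψe u + c * ud u * ψe u) - ue u * Rv +
            c * ud' u * ψe u with hD4v
          clear_value D3v D4v
          have hsq3 : D3v^2 ≤ (K3*Real.exp (-γ*u))^2 := by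
            have h2 := mul_self_le_mul_self (abs_nonneg D3v) hd3
            linarith only [h2, sq_abs D3v]
          have hsq4 : D4v^2 ≤ (K4*Real.exp (-γ*u))^2 := by
            have h2 := mul_self_le_mul_self (abs_nonneg D4v) hd4
            linarith only [h2, sq_abs D4v]
          have hcross3 : 2*d*xe u*D3v ≤ lam*(d*xe u^2) + d*(K3*Real.exp (-γ*u))^2/lam := by
            have h0 : 2*lam*xe u*D3v ≤ lam^2*xe u^2 + (K3*Real.exp (-γ*u))^2 := by
              linarith only [sq_nonneg (lam*xe u - D3v), hsq3]
            have h1 : 2*xe u*D3v ≤ lam*xe u^2 + (K3*Real.exp (-γ*u))^2/lam := by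
              have e1 : 2*xe u*D3v = (2*lam*xe u*D3v)/lam := by field_simp
              have e2 : (lam^2*xe u^2 + (K3*Real.exp (-γ*u))^2)/lam =
                  lam*xe u^2 + (K3*Real.exp (-γ*u))^2/lam := by field_simp
              rw [e1, ← e2]
              exact (div_le_div_iff_of_pos_right hlam0).mpr h0
            have hfin := mul_le_mul_of_nonneg_left h1 hd.le
            ring_nf at hfin ⊢
            linarith only [hfin]
          have hcross4 : 2*vbe u*D4v/d ≤ lam*(vbe u^2/d) + (K4*Real.exp (-γ*u))^2/(d*lam) := by
            have h0 : 2*lam*vbe u*D4v ≤ lam^2*vbe u^2 + (K4*Real.exp (-γ*u))^2 := by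
              linarith only [sq_nonneg (lam*vbe u - D4v), hsq4]
            have e1 : 2*vbe u*D4v/d = (2*lam*vbe u*D4v)/(d*lam) := by field_simp
            have e2 : (lam^2*vbe u^2 + (K4*Real.exp (-γ*u))^2)/(d*lam) =
                lam*(vbe u^2/d) + (K4*Real.exp (-γ*u))^2/(d*lam) := by field_simp
            rw [e1, ← e2]
            exact (div_le_div_iff_of_pos_right (by positivity)).mpr h0
          have hc1 : lam*(d*xe u^2) ≤ (d^2/c)*xe u^2 := by
            have h0 : lam*d ≤ (d/c)*d := mul_le_mul_of_nonneg_right hlamdc hd.le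
            have hfin := mul_le_mul_of_nonneg_right h0 (sq_nonneg (xe u))
            ring_nf at hfin ⊢
            linarith only [hfin]
          have hc2 : lam*(vbe u^2/d) ≤ vbe u^2 := by
            have h0 : lam*(vbe u^2/d) ≤ d*(vbe u^2/d) :=
              mul_le_mul_of_nonneg_right hlamd (by positivity)
            have h1 : d*(vbe u^2/d) = vbe u^2 := by field_simp
            linarith only [h0, h1]
          have hmaster : lam*(d*xe u^2 + vbe u^2/d) +
              (2*d*xe u*(-(d / c) * xe u - (1 / d) * Rv * vbe u + D3v) +
               2*vbe u*(-d * vbe u + d * xe u * Rv + D4v)/d)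
              ≤ Q*(Real.exp (-γ*u))^2 := by
            have hexp : 2*d*xe u*(-(d / c) * xe u - (1 / d) * Rv * vbe u + D3v) +
                2*vbe u*(-d * vbe u + d * xe u * Rv + D4v)/d
                = -2*(d^2/c)*xe u^2 - 2*vbe u^2 + 2*d*xe u*D3v + 2*vbe u*D4v/d := by
              field_simp
              ring
            rw [hexp, hQdef]
            have hQE : ((d*K3^2 + K4^2/d)/lam)*(Real.exp (-γ*u))^2 =
                d*(K3*Real.exp (-γ*u))^2/lam + (K4*Real.exp (-γ*u))^2/(d*lam) := by
              field_simp
            rw [hQE]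
            linarith only [hcross3, hcross4, hc1, hc2]
          have hEl : (0:ℝ) < Real.exp (lam*u) := Real.exp_pos _
          have hQk : Q/κ*(Real.exp (κ*u)*κ) = Q*Real.exp (κ*u) := by field_simp
          have hee : Real.exp (lam*u)*(Real.exp (-γ*u))^2 = Real.exp ((lam-2*γ)*u) := by
            rw [pow_two, ← Real.exp_add, ← Real.exp_add]; congr 1; ring
          have hmono : Real.exp ((lam-2*γ)*u) ≤ Real.exp (κ*u) := by
            apply Real.exp_le_exp.mpr
            apply mul_le_mul_of_nonneg_right _ hu
            rw [hκdef]; linarith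
          have hh := mul_le_mul_of_nonneg_left hmaster hEl.le
          have hh2 : Real.exp (lam*u)*(Q*(Real.exp (-γ*u))^2) = Q*Real.exp ((lam-2*γ)*u) := by
            rw [← hee]; ring
          have hh3 : Q*Real.exp ((lam-2*γ)*u) ≤ Q*Real.exp (κ*u) :=
            mul_le_mul_of_nonneg_left hmono hQ0
          rw [hQk]
          linarith only [hh, hh2, hh3]) hτ
      simp only [mul_zero, Real.exp_zero, one_mul, mul_one] at h1
      exact h1
    -- assemble
    have hV00 : 0 ≤ d*xe 0^2 + vbe 0^2/d := by positivity
    have h1 := hWle t ht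
    have hek1 : (1:ℝ) ≤ Real.exp (κ*t) := Real.one_le_exp (by positivity)
    have hkey : Real.exp (lam*t)*(d*xe t^2 + vbe t^2/d) ≤
        (d*xe 0^2 + vbe 0^2/d + Q/κ)*Real.exp (κ*t) := by
      linarith only [h1, hQκ0, mul_nonneg hV00 (sub_nonneg.mpr hek1)]
    have hVt : d*xe t^2 + vbe t^2/d ≤ (d*xe 0^2 + vbe 0^2/d + Q/κ)*Real.exp (-(m/2)*t) := by
      have hEl : (0:ℝ) < Real.exp (lam*t) := Real.exp_pos _
      have heq : (d*xe 0^2+vbe 0^2/d+Q/κ)*Real.exp (-(m/2)*t) =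
          (d*xe 0^2+vbe 0^2/d+Q/κ)*Real.exp (κ*t)/Real.exp (lam*t) := by
        rw [mul_div_assoc, ← Real.exp_sub]
        congr 2
        rw [hκdef]; ring
      rw [heq, le_div_iff₀ hEl]
      linarith only [hkey]
    have hs60sq : s60^2 = xe 0^2 + vbe 0^2 + ze 0^2 + ψe 0^2 + ue 0^2 + re 0^2 := by
      rw [hs60def]; unfold norm6; exact Real.sq_sqrt (by positivity)
    have hV0le : d*xe 0^2 + vbe 0^2/d ≤ (d+1/d)*s60^2 := by
      rw [hs60sq]
      have h1' : xe 0^2 ≤ xe 0^2+vbe 0^2+ze 0^2+ψe 0^2+ue 0^2+re 0^2 := by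
        linarith only [sq_nonneg (vbe 0), sq_nonneg (ze 0), sq_nonneg (ψe 0), sq_nonneg (ue 0),
          sq_nonneg (re 0)]
      have h2' : vbe 0^2 ≤ xe 0^2+vbe 0^2+ze 0^2+ψe 0^2+ue 0^2+re 0^2 := by
        linarith only [sq_nonneg (xe 0), sq_nonneg (ze 0), sq_nonneg (ψe 0), sq_nonneg (ue 0),
          sq_nonneg (re 0)]
      have hdinv : (0:ℝ) < 1/d := by positivity
      have hf1 := mul_le_mul_of_nonneg_left h1' hd.le
      have hf2 := mul_le_mul_of_nonneg_left h2' hdinv.le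
      ring_nf at hf1 hf2 ⊢
      linarith only [hf1, hf2]
    have hxv : xe t^2 + vbe t^2 ≤ (d+1/d)*(d*xe t^2+vbe t^2/d) := by
      have h0 : (d+1/d)*(d*xe t^2+vbe t^2/d) = d^2*xe t^2 + vbe t^2 + xe t^2 + vbe t^2/d^2 := by
        field_simp
        ring
      rw [h0]
      linarith only [mul_nonneg (sq_nonneg d) (sq_nonneg (xe t)),
        div_nonneg (sq_nonneg (vbe t)) (sq_nonneg d)]
    have hn4 : ze t^2+ψe t^2+ue t^2+re t^2 ≤ (P*Real.exp (-γ*t))^2 := by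
      have h := hsub4 t ht
      have h0 : (0:ℝ) ≤ ze t^2+ψe t^2+ue t^2+re t^2 := by positivity
      have h1' : norm4 (ze t) (ψe t) (ue t) (re t)^2 = ze t^2+ψe t^2+ue t^2+re t^2 := by
        unfold norm4; exact Real.sq_sqrt h0
      calc ze t^2+ψe t^2+ue t^2+re t^2 = norm4 (ze t) (ψe t) (ue t) (re t)^2 := h1'.symm
      _ ≤ (P*Real.exp (-γ*t))^2 := pow_le_pow_left₀ (by unfold norm4; exact Real.sqrt_nonneg _) h 2
    have hexp1 : Real.exp (-(m/2)*t) = (Real.exp (-(m/4)*t))^2 := by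
      rw [pow_two, ← Real.exp_add]; congr 1; ring
    have hexp2 : (Real.exp (-γ*t))^2 ≤ (Real.exp (-(m/4)*t))^2 := by
      apply pow_le_pow_left₀ (Real.exp_pos _).le
      apply Real.exp_le_exp.mpr
      linarith only [mul_nonneg (show (0:ℝ) ≤ γ - m/4 by linarith only [hmγ, hm0, hγ]) ht]
    have hdd : (0:ℝ) < d + 1/d := by positivity
    have hsum : xe t^2+vbe t^2+ze t^2+ψe t^2+ue t^2+re t^2 ≤
        ((d+1/d)*((d+1/d)*s60^2 + Q/κ) + P^2) * (Real.exp (-(m/4)*t))^2 := by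
      have hEm : (0:ℝ) < Real.exp (-(m/2)*t) := Real.exp_pos _
      have s1 : xe t^2+vbe t^2 ≤ (d+1/d)*(((d+1/d)*s60^2+Q/κ)*Real.exp (-(m/2)*t)) := by
        have a3 := mul_le_mul_of_nonneg_left hVt hdd.le
        have a4 : (d*xe 0^2+vbe 0^2/d+Q/κ)*Real.exp (-(m/2)*t) ≤
            ((d+1/d)*s60^2+Q/κ)*Real.exp (-(m/2)*t) :=
          mul_le_mul_of_nonneg_right (by linarith) hEm.le
        have a5 := mul_le_mul_of_nonneg_left a4 hdd.le
        linarith only [hxv, a3, a5]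
      have s2 : ze t^2+ψe t^2+ue t^2+re t^2 ≤ P^2*(Real.exp (-(m/4)*t))^2 := by
        have h2' : (P*Real.exp (-γ*t))^2 = P^2*(Real.exp (-γ*t))^2 := by ring
        linarith only [hn4, mul_le_mul_of_nonneg_left hexp2 (sq_nonneg P)]
      rw [hexp1] at s1
      linarith only [s1, s2]
    have hB0 : 0 ≤ (d+1/d)*((d+1/d)*s60^2 + Q/κ) + P^2 :=
      add_nonneg (mul_nonneg hdd.le (add_nonneg (mul_nonneg hdd.le (sq_nonneg s60)) hQκ0))
        (sq_nonneg P)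
    unfold norm6
    calc Real.sqrt (xe t^2+vbe t^2+ze t^2+ψe t^2+ue t^2+re t^2) ≤
        Real.sqrt (((d+1/d)*((d+1/d)*s60^2+Q/κ)+P^2)*(Real.exp (-(m/4)*t))^2) :=
          Real.sqrt_le_sqrt hsum
    _ = Real.sqrt ((d+1/d)*((d+1/d)*s60^2+Q/κ)+P^2) * Real.exp (-(m/4)*t) := by
        rw [Real.sqrt_mul hB0, Real.sqrt_sq (Real.exp_pos _).le]
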